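/- Let k > 2 and m ≥ φ(k) + 1 be integers, and write Φ_k(m+X) = Σ_{d=0}^{φ(k)} p_d X^d. Then the constant term satisfies p_0 = Φ_k(m) ≥ (1/2)(m-1)^{φ(k)} ≥ 2. -/
import Mathlib


open Polynomial

/-- The constant term of `Φ_k(m + X)` equals `Φ_k(m)` and satisfies
`p₀ ≥ (1/2)(m-1)^{φ(k)} ≥ 2` when `k > 2` and `m ≥ φ(k) + 1`. -/
theorem cyclotomic_shift_constant_term (k m : ℕ) (hk : 2 < k)
    (hm : Nat.totient k + 1 ≤ m) :
    ((cyclotomic k ℤ).comp (X + C (m : ℤ))).coeff 0 = (cyclotomic k ℤ).eval (m : ℤ) ∧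
      (1 / 2 : ℝ) * ((m : ℝ) - 1) ^ Nat.totient k ≤
        (((cyclotomic k ℤ).comp (X + C (m : ℤ))).coeff 0 : ℝ) ∧
      (2 : ℝ) ≤ (1 / 2 : ℝ) * ((m : ℝ) - 1) ^ Nat.totient k := by
  have htot : 2 ≤ Nat.totient k := by
    have h1 : Nat.totient k ≠ 1 := by
      intro h
      have := (Nat.totient_eq_one_iff).mp h
      omega
    have h0 : 0 < Nat.totient k := Nat.totient_pos.mpr (by omega)
    omega
  have hm3 : 3 ≤ m := by omega
  have h0 : ((cyclotomic k ℤ).comp (X + C (m : ℤ))).coeff 0 = (cyclotomic k ℤ).eval (m : ℤ) := by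
    rw [Polynomial.coeff_zero_eq_eval_zero, eval_comp]
    simp
  refine ⟨h0, ?_, ?_⟩
  · rw [h0]
    have hq : (1 : ℝ) < (m : ℝ) := by exact_mod_cast by omega
    have hlt := sub_one_pow_totient_lt_cyclotomic_eval (n := k) (q := (m : ℝ)) (by omega) hq
    have hcast : (((cyclotomic k ℤ).eval (m : ℤ) : ℤ) : ℝ) = (cyclotomic k ℝ).eval (m : ℝ) := by
      rw [← map_cyclotomic_int k ℝ, eval_natCast_map]
      simp
    rw [hcast]
    have hnn : (0 : ℝ) ≤ ((m : ℝ) - 1) ^ Nat.totient k := pow_nonneg (by linarith) _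
    nlinarith [hlt]
  · have h2 : (2 : ℝ) ≤ (m : ℝ) - 1 := by
      have : (3 : ℝ) ≤ (m : ℝ) := by exact_mod_cast hm3
      linarith
    have h4 : (4 : ℝ) ≤ ((m : ℝ) - 1) ^ Nat.totient k := by
      calc (4 : ℝ) = 2 ^ 2 := by norm_num
        _ ≤ 2 ^ Nat.totient k := by
            exact pow_le_pow_right₀ (by norm_num) htot
        _ ≤ ((m : ℝ) - 1) ^ Nat.totient k := by
            exact pow_le_pow_left₀ (by norm_num) h2 _
    linarith
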